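/- arXiv:1305.1491 — 2 statements merged into one kernel-verified Lean document; each statement's English description precedes it below -/
import Mathlib

section
/- The map Π given in coordinates by Π(ζ, Z) = (Z₁ + iZ₂ + cζ(1+Z₃)) / (c·ζ̄·(Z₁+iZ₂) + 1 + Z₃), applied to a unit vector Z = (Z₁,Z₂,Z₃) ∈ ℝ³ with Z₃ > 0 and a point ζ with c|ζ| < 1, takes values in the open unit disk. -/
open Complex

theorem gaussMap_upper_hemisphere_in_disk (c : ℝ) (hc : 0 < c) (ζ : ℂ)
    (hζ : c * ‖ζ‖ < 1) (Z₁ Z₂ Z₃ : ℝ)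
    (hZ : Z₁ ^ 2 + Z₂ ^ 2 + Z₃ ^ 2 = 1) (hZ₃ : 0 < Z₃) :
    (c : ℂ) * (starRingEnd ℂ) ζ * (Z₁ + Z₂ * Complex.I) + 1 + Z₃ ≠ 0 ∧
    ‖(((Z₁ + Z₂ * Complex.I) + c * ζ * (1 + Z₃)) /
      ((c : ℂ) * (starRingEnd ℂ) ζ * (Z₁ + Z₂ * Complex.I) + 1 + Z₃) : ℂ)‖ < 1 := by
  set x := ζ.re with hx
  set y := ζ.im with hy
  have habs2 : ‖ζ‖ ^ 2 = x ^ 2 + y ^ 2 := by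
    rw [Complex.sq_norm, Complex.normSq_apply]; ring
  have hcz : c ^ 2 * (x ^ 2 + y ^ 2) < 1 := by
    have h1 : (c * ‖ζ‖) ^ 2 < 1 ^ 2 := by
      apply pow_lt_pow_left₀ hζ (by positivity) (by norm_num)
    calc c ^ 2 * (x ^ 2 + y ^ 2) = (c * ‖ζ‖) ^ 2 := by rw [mul_pow, habs2]
      _ < 1 := by linarith
  set N : ℂ := (Z₁ + Z₂ * Complex.I) + c * ζ * (1 + Z₃) with hN
  set D : ℂ := (c : ℂ) * (starRingEnd ℂ) ζ * (Z₁ + Z₂ * Complex.I) + 1 + Z₃ with hD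
  have hNsq : Complex.normSq N = (Z₁ + c * (x * (1 + Z₃))) ^ 2 + (Z₂ + c * (y * (1 + Z₃))) ^ 2 := by
    simp [hN, Complex.normSq_apply, Complex.add_re, Complex.add_im, Complex.mul_re,
      Complex.mul_im, ← hx, ← hy]
    ring
  have hDsq : Complex.normSq D = (c * (x * Z₁ + y * Z₂) + (1 + Z₃)) ^ 2
      + (c * (x * Z₂ - y * Z₁)) ^ 2 := by
    simp [hD, Complex.normSq_apply, Complex.add_re, Complex.add_im, Complex.mul_re,
      Complex.mul_im, ← hx, ← hy]
    ring
  have hdiff : Complex.normSq D - Complex.normSq N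
      = (1 - c ^ 2 * (x ^ 2 + y ^ 2)) * ((1 + Z₃) ^ 2 - (Z₁ ^ 2 + Z₂ ^ 2)) := by
    rw [hNsq, hDsq]; ring
  have hfac : (0:ℝ) < (1 - c ^ 2 * (x ^ 2 + y ^ 2)) * ((1 + Z₃) ^ 2 - (Z₁ ^ 2 + Z₂ ^ 2)) := by
    have h2 : Z₁ ^ 2 + Z₂ ^ 2 = 1 - Z₃ ^ 2 := by linarith
    apply mul_pos (by linarith)
    nlinarith
  have hlt : Complex.normSq N < Complex.normSq D := by linarith
  have hDpos : 0 < Complex.normSq D := lt_of_le_of_lt (Complex.normSq_nonneg N) hlt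
  have hDne : D ≠ 0 := fun h => by simp [h] at hDpos
  refine ⟨hDne, ?_⟩
  rw [norm_div, div_lt_one (norm_pos_iff.mpr hDne)]
  have habslt : ‖N‖ ^ 2 < ‖D‖ ^ 2 := by
    rwa [Complex.sq_norm, Complex.sq_norm]
  exact lt_of_pow_lt_pow_left₀ 2 (norm_nonneg D) habslt
end

section
/- The rotation formula for Π: if r(Z) = (Z₁, −Z₂, −Z₃) and ζ is replaced by ζ̄, then Π(ζ̄, r(Z)) = 1/Π(ζ, Z) whenever Π(ζ,Z) ≠ 0 and denominators are nonzero. -/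
open Complex

theorem piMap_rotation_formula (c : ℝ) (hc : 0 < c) (ζ : ℂ)
    (hζ : c * ‖ζ‖ < 1) (Z₁ Z₂ Z₃ : ℝ)
    (hZ : Z₁ ^ 2 + Z₂ ^ 2 + Z₃ ^ 2 = 1)
    (hden₁ : (c : ℂ) * (starRingEnd ℂ) ζ * ((Z₁ : ℂ) + Z₂ * Complex.I) + 1 + Z₃ ≠ 0)
    (hden₂ : (c : ℂ) * ζ * ((Z₁ : ℂ) + (-Z₂ : ℝ) * Complex.I) + 1 + ((-Z₃ : ℝ) : ℂ) ≠ 0)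
    (hPi : ((Z₁ : ℂ) + Z₂ * Complex.I + c * ζ * (1 + Z₃)) /
      ((c : ℂ) * (starRingEnd ℂ) ζ * ((Z₁ : ℂ) + Z₂ * Complex.I) + 1 + Z₃) ≠ 0) :
    ((Z₁ : ℂ) + (-Z₂ : ℝ) * Complex.I + c * (starRingEnd ℂ) ζ * (1 + ((-Z₃ : ℝ) : ℂ))) /
        ((c : ℂ) * ζ * ((Z₁ : ℂ) + (-Z₂ : ℝ) * Complex.I) + 1 + ((-Z₃ : ℝ) : ℂ))
      = 1 / (((Z₁ : ℂ) + Z₂ * Complex.I + c * ζ * (1 + Z₃)) /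
          ((c : ℂ) * (starRingEnd ℂ) ζ * ((Z₁ : ℂ) + Z₂ * Complex.I) + 1 + Z₃)) := by
  have hnum : ((Z₁ : ℂ) + Z₂ * Complex.I + c * ζ * (1 + Z₃)) ≠ 0 := by
    intro h
    exact hPi (by rw [h, zero_div])
  rw [one_div_div]
  rw [div_eq_div_iff hden₂ hnum]
  have hZ' : ((Z₁:ℂ))^2 + (Z₂:ℂ)^2 + (Z₃:ℂ)^2 = 1 := by
    exact_mod_cast congrArg (Complex.ofReal) hZ
  push_cast
  ring_nf
  ring_nf at hZ'
  linear_combination (1 - (c:ℂ)^2 * ζ * (starRingEnd ℂ ζ)) * hZ' + ((c:ℂ)^2 * (starRingEnd ℂ) ζ * ζ * Z₂^2 - (Z₂:ℂ)^2) * Complex.I_sq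
end
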